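/- Let (X_t)_{t≥0} be a matrix-valued Lévy process (additive or multiplicative) in M_N(ℂ) all of whose entries have finite moments of all orders, and suppose that for every k ≥ 1 the map t ↦ E[X_t^{⊗k}] is differentiable at t = 0, with derivative G_k. Then for every k ≥ 1 and every t₀ ≥ 0 the map t ↦ E[X_t^{⊗k}] is differentiable at t₀, and: (1) if (X_t) is an additive Lévy process, (d/dt)|_{t=t₀} E[X_t^{⊗k}] = Σ_{l=0}^{k−1} Σ_{I ⊆ {1,…,k}, |I| = l} 𝓘_I(E[X_{t₀}^{⊗l}], G_{k−l}); (2) if (X_t) is a multiplicative Lévy process, (d/dt)|_{t=t₀} E[X_t^{⊗k}] = G_k · E[X_{t₀}^{⊗k}]. -/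

import Mathlib

open scoped Classical
open MeasureTheory ProbabilityTheory

/-- the entry at `(r, c)` of `E[X^{⊗k}]` for a random matrix `X`. -/
noncomputable def tensMom {N k : ℕ} {Ω : Type*} [MeasurableSpace Ω] (μ : Measure Ω)
    (X : Ω → Matrix (Fin N) (Fin N) ℂ) (r c : Fin k → Fin N) : ℂ :=
  ∫ ω, ∏ s, X ω (r s) (c s) ∂μ

/-- the entry at `(r, c)` of the insertion operator `𝓘_I(A, B) = P(σ_I)⁻¹ (A ⊗ B) P(σ_I)`,
which lets `A` act on the tensor slots in `I` (in increasing order) and `B` on the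
remaining slots. -/
noncomputable def insEntry {N k : ℕ} (I : Finset (Fin k))
    (A : (Fin I.card → Fin N) → (Fin I.card → Fin N) → ℂ)
    (B : (Fin Iᶜ.card → Fin N) → (Fin Iᶜ.card → Fin N) → ℂ)
    (r c : Fin k → Fin N) : ℂ :=
  A (fun t => r (I.orderIsoOfFin rfl t)) (fun t => c (I.orderIsoOfFin rfl t)) *
    B (fun t => r (Iᶜ.orderIsoOfFin rfl t)) (fun t => c (Iᶜ.orderIsoOfFin rfl t))

/-- `(X_t)_{t ≥ 0}` is an additive matrix Lévy process: `X₀ = 0`; càdlàg paths;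
stochastic continuity; independent and stationary increments. -/
def IsAdditiveLevy {N : ℕ} {Ω : Type*} [MeasurableSpace Ω] (μ : Measure Ω)
    (X : ℝ → Ω → Matrix (Fin N) (Fin N) ℂ) : Prop :=
  (∀ ω, X 0 ω = 0) ∧
  (∀ ω (r s : Fin N) (t₀ : ℝ), 0 ≤ t₀ →
    ContinuousWithinAt (fun t => X t ω r s) (Set.Ici t₀) t₀ ∧
      (0 < t₀ → ∃ Llim : ℂ,
        Filter.Tendsto (fun t => X t ω r s) (nhdsWithin t₀ (Set.Iio t₀ ∩ Set.Ici 0))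
          (nhds Llim))) ∧
  (∀ (r s : Fin N) (t₀ : ℝ), 0 ≤ t₀ → ∀ ε : ℝ, 0 < ε →
    Filter.Tendsto (fun t => μ {ω | ε ≤ ‖X t ω r s - X t₀ ω r s‖})
      (nhdsWithin t₀ (Set.Ici 0)) (nhds 0)) ∧
  (∀ t s : ℝ, 0 ≤ t → t ≤ s →
    IndepFun (fun ω => fun rc : Fin N × Fin N => (X s ω - X t ω) rc.1 rc.2)
      (fun ω => fun q : {u : ℝ // 0 ≤ u ∧ u ≤ t} × Fin N × Fin N =>
        X q.1 ω q.2.1 q.2.2) μ) ∧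
  (∀ t s : ℝ, 0 ≤ t → t ≤ s →
    Measure.map (fun ω => fun rc : Fin N × Fin N => (X s ω - X t ω) rc.1 rc.2) μ =
      Measure.map (fun ω => fun rc : Fin N × Fin N => X (s - t) ω rc.1 rc.2) μ)

/-- `(X_t)_{t ≥ 0}` is a multiplicative matrix Lévy process: `X₀ = 1`, values in `GL_N(ℂ)`;
càdlàg paths; stochastic continuity; independent and stationary multiplicative increments
`X_s X_t⁻¹`. -/
def IsMultiplicativeLevy {N : ℕ} {Ω : Type*} [MeasurableSpace Ω] (μ : Measure Ω)
    (X : ℝ → Ω → Matrix (Fin N) (Fin N) ℂ) : Prop :=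
  (∀ ω, X 0 ω = 1) ∧
  (∀ (t : ℝ) ω, 0 ≤ t → IsUnit (X t ω)) ∧
  (∀ ω (r s : Fin N) (t₀ : ℝ), 0 ≤ t₀ →
    ContinuousWithinAt (fun t => X t ω r s) (Set.Ici t₀) t₀ ∧
      (0 < t₀ → ∃ Llim : ℂ,
        Filter.Tendsto (fun t => X t ω r s) (nhdsWithin t₀ (Set.Iio t₀ ∩ Set.Ici 0))
          (nhds Llim))) ∧
  (∀ (r s : Fin N) (t₀ : ℝ), 0 ≤ t₀ → ∀ ε : ℝ, 0 < ε →
    Filter.Tendsto (fun t => μ {ω | ε ≤ ‖X t ω r s - X t₀ ω r s‖})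
      (nhdsWithin t₀ (Set.Ici 0)) (nhds 0)) ∧
  (∀ t s : ℝ, 0 ≤ t → t ≤ s →
    IndepFun (fun ω => fun rc : Fin N × Fin N => (X s ω * Ring.inverse (X t ω)) rc.1 rc.2)
      (fun ω => fun q : {u : ℝ // 0 ≤ u ∧ u ≤ t} × Fin N × Fin N =>
        X q.1 ω q.2.1 q.2.2) μ) ∧
  (∀ t s : ℝ, 0 ≤ t → t ≤ s →
    Measure.map
        (fun ω => fun rc : Fin N × Fin N => (X s ω * Ring.inverse (X t ω)) rc.1 rc.2) μ =
      Measure.map (fun ω => fun rc : Fin N × Fin N => X (s - t) ω rc.1 rc.2) μ)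


section LevyAux

set_option linter.unusedSectionVars false
set_option maxHeartbeats 1000000

open Filter Set

variable {N k : ℕ} {Ω : Type*} [MeasurableSpace Ω] {μ : Measure Ω} [IsProbabilityMeasure μ]
  {X : ℝ → Ω → Matrix (Fin N) (Fin N) ℂ}

/-! ### Generic helpers -/

lemma smul_sub_sum {ι : Type*} (s : Finset ι) (C a b : ι → ℂ) (u : ℝ) :
    (-u)⁻¹ • ((∑ i ∈ s, C i * b i) - ∑ i ∈ s, C i * a i) =
      ∑ i ∈ s, C i * (u⁻¹ • (a i - b i)) := by
  rw [← Finset.sum_sub_distrib, Finset.smul_sum]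
  refine Finset.sum_congr rfl fun i _ => ?_
  rw [← mul_sub, mul_smul_comm, inv_neg, neg_smul, ← smul_neg]
  congr 1
  ring

lemma smul_sub_sum' {ι : Type*} (s : Finset ι) (C a b : ι → ℂ) (u : ℝ) :
    (-u)⁻¹ • ((∑ i ∈ s, b i * C i) - ∑ i ∈ s, a i * C i) =
      ∑ i ∈ s, (u⁻¹ • (a i - b i)) * C i := by
  rw [← Finset.sum_sub_distrib, Finset.smul_sum]
  refine Finset.sum_congr rfl fun i _ => ?_
  rw [← sub_mul, smul_mul_assoc, inv_neg, neg_smul, ← smul_neg]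
  congr 1
  ring

lemma tendsto_sub_left (t₀ : ℝ) :
    Tendsto (fun t => t₀ - t) (nhdsWithin t₀ (Set.Ici 0 ∩ Set.Iio t₀))
      (nhdsWithin 0 (Set.Ici 0 \ {0})) := by
  rw [tendsto_nhdsWithin_iff]
  constructor
  · have h : Tendsto (fun t : ℝ => t₀ - t) (nhds t₀) (nhds (t₀ - t₀)) :=
      (continuous_const.sub continuous_id).tendsto t₀
    rw [sub_self] at h
    exact h.mono_left (nhdsWithin_le_nhds (s := Set.Ici 0 ∩ Set.Iio t₀))
  · filter_upwards [self_mem_nhdsWithin] with t ht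
    exact ⟨Set.mem_Ici.2 (sub_nonneg.2 ht.2.le), sub_ne_zero.2 (ne_of_gt ht.2)⟩

lemma tendsto_sub_left' (t₀ : ℝ) :
    Tendsto (fun t => t₀ - t) (nhdsWithin t₀ (Set.Ici 0 ∩ Set.Iio t₀))
      (nhdsWithin 0 (Set.Ici 0)) :=
  (tendsto_sub_left t₀).mono_right (nhdsWithin_mono 0 diff_subset)

lemma combine_tendsto {f : ℝ → ℂ} {L : ℂ} {t₀ : ℝ}
    (hr : Tendsto f (nhdsWithin t₀ (Set.Ici t₀)) (nhds L))
    (hl : Tendsto f (nhdsWithin t₀ (Set.Ici 0 ∩ Set.Iio t₀)) (nhds L)) :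
    Tendsto f (nhdsWithin t₀ (Set.Ici 0)) (nhds L) := by
  have hsub : Set.Ici (0:ℝ) ⊆ (Set.Ici 0 ∩ Set.Iio t₀) ∪ Set.Ici t₀ := by
    intro x hx
    rcases lt_or_ge x t₀ with h | h
    · exact Or.inl ⟨hx, h⟩
    · exact Or.inr h
  refine Tendsto.mono_left ?_ (nhdsWithin_mono _ hsub)
  rw [nhdsWithin_union]
  exact tendsto_sup.2 ⟨hl, hr⟩

lemma combine_slope {f : ℝ → ℂ} {D : ℂ} {t₀ : ℝ}
    (hr : HasDerivWithinAt f D (Set.Ici t₀) t₀)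
    (hl : Tendsto (slope f t₀) (nhdsWithin t₀ (Set.Ici 0 ∩ Set.Iio t₀)) (nhds D)) :
    HasDerivWithinAt f D (Set.Ici 0) t₀ := by
  rw [hasDerivWithinAt_iff_tendsto_slope] at hr ⊢
  have hsub : Set.Ici (0:ℝ) \ {t₀} ⊆ (Set.Ici 0 ∩ Set.Iio t₀) ∪ (Set.Ici t₀ \ {t₀}) := by
    rintro x ⟨hx0, hxne⟩
    rcases lt_or_ge x t₀ with h | h
    · exact Or.inl ⟨hx0, h⟩
    · exact Or.inr ⟨h, hxne⟩
  refine Tendsto.mono_left ?_ (nhdsWithin_mono _ hsub)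
  rw [nhdsWithin_union]
  exact tendsto_sup.2 ⟨hl, hr⟩

/-! ### tensMom basics -/

lemma prod_reindex (I : Finset (Fin k)) (h : Fin k → ℂ) :
    (∏ j : Fin I.card, h (I.orderIsoOfFin rfl j)) = ∏ i ∈ I, h i := by
  rw [← Finset.prod_coe_sort I h]
  exact Equiv.prod_comp (I.orderIsoOfFin rfl).toEquiv (fun x : ↥I => h ↑x)

lemma tensMom_reindex (Y : Ω → Matrix (Fin N) (Fin N) ℂ) (I : Finset (Fin k))
    (r c : Fin k → Fin N) :
    tensMom μ Y (fun j => r (I.orderIsoOfFin rfl j)) (fun j => c (I.orderIsoOfFin rfl j)) =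
      ∫ ω, ∏ i ∈ I, Y ω (r i) (c i) ∂μ := by
  unfold tensMom
  congr 1
  funext ω
  exact prod_reindex I (fun i => Y ω (r i) (c i))

lemma tensMom_zero_order (Y : Ω → Matrix (Fin N) (Fin N) ℂ) {m : ℕ} (hm : m = 0)
    (r c : Fin m → Fin N) : tensMom μ Y r c = 1 := by
  subst hm
  simp [tensMom]

lemma card_compl_eq_zero {I : Finset (Fin k)} (hI : I = Finset.univ) : Iᶜ.card = 0 := by
  rw [hI, Finset.compl_univ, Finset.card_empty]

lemma card_lt_of_ne_univ {I : Finset (Fin k)} (hI : I ≠ Finset.univ) : I.card < k := by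
  have h := Finset.card_lt_card (lt_of_le_of_ne (Finset.subset_univ I) hI)
  simpa using h

lemma measurable_prodEntries (hmeas : ∀ t r s, Measurable fun ω => X t ω r s) (t : ℝ)
    (I : Finset (Fin k)) (r c : Fin k → Fin N) :
    Measurable (fun ω => ∏ i ∈ I, X t ω (r i) (c i)) :=
  Finset.measurable_prod _ (fun i _ => hmeas t (r i) (c i))

lemma integrable_prodEntries
    (hint : ∀ (t : ℝ) (k : ℕ) (h : Fin k → Fin N × Fin N),
      Integrable (fun ω => ∏ s, X t ω (h s).1 (h s).2) μ)
    (t : ℝ) (I : Finset (Fin k)) (r c : Fin k → Fin N) :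
    Integrable (fun ω => ∏ i ∈ I, X t ω (r i) (c i)) μ := by
  have heq : (fun ω => ∏ i ∈ I, X t ω (r i) (c i)) =
      fun ω => ∏ j : Fin I.card,
        X t ω (r (I.orderIsoOfFin rfl j)) (c (I.orderIsoOfFin rfl j)) :=
    funext fun ω => (prod_reindex I fun i => X t ω (r i) (c i)).symm
  rw [heq]
  exact hint t I.card (fun j => (r (I.orderIsoOfFin rfl j), c (I.orderIsoOfFin rfl j)))

lemma indep_integral_mul {A B : Ω → ℂ} (hA : Measurable A) (hB : Measurable B)
    (h : IndepFun A B μ) : ∫ ω, A ω * B ω ∂μ = (∫ ω, A ω ∂μ) * ∫ ω, B ω ∂μ := by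
  have hmap := (indepFun_iff_map_prod_eq_prod_map_map hA.aemeasurable hB.aemeasurable).1 h
  have h1 : ∫ ω, A ω * B ω ∂μ = ∫ z : ℂ × ℂ, z.1 * z.2 ∂(μ.map fun ω => (A ω, B ω)) := by
    rw [integral_map (hA.prodMk hB).aemeasurable]
    exact (measurable_fst.mul measurable_snd).aestronglyMeasurable
  have h2 : ∫ z : ℂ × ℂ, z.1 * z.2 ∂((μ.map A).prod (μ.map B)) =
      (∫ x : ℂ, x ∂(μ.map A)) * ∫ y : ℂ, y ∂(μ.map B) :=
    integral_prod_mul (fun x : ℂ => x) (fun y : ℂ => y)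
  have h3 : ∫ x : ℂ, x ∂(μ.map A) = ∫ ω, A ω ∂μ :=
    integral_map hA.aemeasurable aestronglyMeasurable_id
  have h4 : ∫ x : ℂ, x ∂(μ.map B) = ∫ ω, B ω ∂μ :=
    integral_map hB.aemeasurable aestronglyMeasurable_id
  rw [h1, hmap, h2, h3, h4]

lemma measurable_det {M : Ω → Matrix (Fin N) (Fin N) ℂ}
    (h : ∀ i j, Measurable fun ω => M ω i j) : Measurable fun ω => (M ω).det := by
  simp_rw [Matrix.det_apply']
  exact Finset.measurable_sum _ fun σ _ =>
    (measurable_const.mul (Finset.measurable_prod _ fun i _ => h _ _))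

lemma measurable_ringInverse_entry {M : Ω → Matrix (Fin N) (Fin N) ℂ}
    (h : ∀ i j, Measurable fun ω => M ω i j) (i j : Fin N) :
    Measurable fun ω => Ring.inverse (M ω) i j := by
  have heq : (fun ω => Ring.inverse (M ω) i j) =
      fun ω => ((M ω).det)⁻¹ * (M ω).adjugate i j := by
    funext ω
    rw [← Matrix.nonsing_inv_eq_ringInverse, Matrix.inv_def, Matrix.smul_apply,
      Ring.inverse_eq_inv, smul_eq_mul]
  rw [heq]
  apply Measurable.mul
  · exact (measurable_det h).inv
  · have heq2 : (fun ω => (M ω).adjugate i j) =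
        fun ω => ((M ω).updateRow j (Pi.single i 1)).det := by
      funext ω; rw [Matrix.adjugate_apply]
    rw [heq2]
    apply measurable_det
    intro a b
    simp only [Matrix.updateRow_apply]
    by_cases hab : a = j <;> simp [hab, h a b]

/-! ### Expansion identities -/

lemma additive_expand (hL : IsAdditiveLevy μ X)
    (hmeas : ∀ t r s, Measurable fun ω => X t ω r s)
    (hint : ∀ (t : ℝ) (k : ℕ) (h : Fin k → Fin N × Fin N),
      Integrable (fun ω => ∏ s, X t ω (h s).1 (h s).2) μ)
    (r c : Fin k → Fin N) {t s : ℝ} (ht : 0 ≤ t) (hts : t ≤ s) :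
    tensMom μ (X s) r c =
      ∑ I : Finset (Fin k),
        (∫ ω, ∏ i ∈ I, X t ω (r i) (c i) ∂μ) *
          ∫ ω, ∏ i ∈ Iᶜ, X (s - t) ω (r i) (c i) ∂μ := by
  classical
  set T : Ω → (Fin N × Fin N) → ℂ := fun ω rc => (X s ω - X t ω) rc.1 rc.2 with hTdef
  set T' : Ω → (Fin N × Fin N) → ℂ := fun ω rc => X (s - t) ω rc.1 rc.2 with hT'def
  have hT : Measurable T := by
    apply measurable_pi_lambda
    intro rc
    have heq : (fun ω => T ω rc) = fun ω => X s ω rc.1 rc.2 - X t ω rc.1 rc.2 := by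
      funext ω; simp [hTdef, Matrix.sub_apply]
    rw [heq]
    exact (hmeas s rc.1 rc.2).sub (hmeas t rc.1 rc.2)
  have hT' : Measurable T' :=
    measurable_pi_lambda _ fun rc => hmeas (s - t) rc.1 rc.2
  have main : ∀ I : Finset (Fin k),
      ∫ ω, (∏ i ∈ I, X t ω (r i) (c i)) * ∏ i ∈ Iᶜ, T ω (r i, c i) ∂μ =
        (∫ ω, ∏ i ∈ I, X t ω (r i) (c i) ∂μ) *
          ∫ ω, ∏ i ∈ Iᶜ, X (s - t) ω (r i) (c i) ∂μ := by
    intro I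
    set φ : ((Fin N × Fin N) → ℂ) → ℂ := fun v => ∏ i ∈ Iᶜ, v (r i, c i) with hφdef
    have hφ : Measurable φ := Finset.measurable_prod _ fun i _ => measurable_pi_apply _
    set ψ : (({u : ℝ // 0 ≤ u ∧ u ≤ t} × Fin N × Fin N) → ℂ) → ℂ :=
      fun w => ∏ i ∈ I, w (⟨t, ht, le_rfl⟩, (r i, c i)) with hψdef
    have hψ : Measurable ψ := Finset.measurable_prod _ fun i _ => measurable_pi_apply _
    have hIndep := (hL.2.2.2.1 t s ht hts).comp hφ hψ
    have hIndep' : IndepFun (fun ω => ∏ i ∈ Iᶜ, T ω (r i, c i))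
        (fun ω => ∏ i ∈ I, X t ω (r i) (c i)) μ := hIndep
    have hstat : ∫ ω, ∏ i ∈ Iᶜ, T ω (r i, c i) ∂μ =
        ∫ ω, ∏ i ∈ Iᶜ, X (s - t) ω (r i) (c i) ∂μ := by
      have e1 : ∫ ω, ∏ i ∈ Iᶜ, T ω (r i, c i) ∂μ = ∫ v, φ v ∂(μ.map T) :=
        (integral_map hT.aemeasurable hφ.aestronglyMeasurable).symm
      have e2 : ∫ v, φ v ∂(μ.map T') = ∫ ω, ∏ i ∈ Iᶜ, X (s - t) ω (r i) (c i) ∂μ :=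
        integral_map hT'.aemeasurable hφ.aestronglyMeasurable
      rw [e1, hL.2.2.2.2 t s ht hts, e2]
    have hswap : ∫ ω, (∏ i ∈ I, X t ω (r i) (c i)) * ∏ i ∈ Iᶜ, T ω (r i, c i) ∂μ =
        ∫ ω, (∏ i ∈ Iᶜ, T ω (r i, c i)) * ∏ i ∈ I, X t ω (r i) (c i) ∂μ :=
      integral_congr_ae (Filter.Eventually.of_forall fun ω => mul_comm _ _)
    rw [hswap]
    have hmul := indep_integral_mul (A := fun ω => ∏ i ∈ Iᶜ, T ω (r i, c i))
      (B := fun ω => ∏ i ∈ I, X t ω (r i) (c i))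
      (hφ.comp hT) ((measurable_prodEntries hmeas t I r c)) hIndep'
    calc ∫ ω, (∏ i ∈ Iᶜ, T ω (r i, c i)) * ∏ i ∈ I, X t ω (r i) (c i) ∂μ
        = (∫ ω, ∏ i ∈ Iᶜ, T ω (r i, c i) ∂μ) * ∫ ω, ∏ i ∈ I, X t ω (r i) (c i) ∂μ := hmul
      _ = _ := by rw [hstat, mul_comm]
  have hYint : ∀ I : Finset (Fin k),
      Integrable (fun ω => ∏ i ∈ Iᶜ, T ω (r i, c i)) μ := by
    intro I
    set φ : ((Fin N × Fin N) → ℂ) → ℂ := fun v => ∏ i ∈ Iᶜ, v (r i, c i) with hφdef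
    have hφ : Measurable φ := Finset.measurable_prod _ fun i _ => measurable_pi_apply _
    have h1 : Integrable (φ ∘ T') μ := by
      have heq : (φ ∘ T') = fun ω => ∏ i ∈ Iᶜ, X (s - t) ω (r i) (c i) := rfl
      rw [heq]
      exact integrable_prodEntries hint (s - t) Iᶜ r c
    have h2 : Integrable φ (μ.map T') :=
      (integrable_map_measure hφ.aestronglyMeasurable hT'.aemeasurable).mpr h1
    have h3 : Integrable φ (μ.map T) := by rw [hL.2.2.2.2 t s ht hts]; exact h2
    exact (integrable_map_measure hφ.aestronglyMeasurable hT.aemeasurable).mp h3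
  have key : ∀ ω, (∏ i, X s ω (r i) (c i)) =
      ∑ I : Finset (Fin k),
        (∏ i ∈ I, X t ω (r i) (c i)) * ∏ i ∈ Iᶜ, T ω (r i, c i) := by
    intro ω
    have h0 : ∀ i : Fin k, X s ω (r i) (c i) = X t ω (r i) (c i) + T ω (r i, c i) := by
      intro i; simp [hTdef, Matrix.sub_apply]
    calc (∏ i, X s ω (r i) (c i))
        = ∏ i, (X t ω (r i) (c i) + T ω (r i, c i)) :=
          Finset.prod_congr rfl fun i _ => h0 i
      _ = ∑ I ∈ (Finset.univ : Finset (Fin k)).powerset,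
            (∏ i ∈ I, X t ω (r i) (c i)) * ∏ i ∈ Finset.univ \ I, T ω (r i, c i) :=
          Finset.prod_add _ _ _
      _ = _ := by
          rw [Finset.powerset_univ]
          exact Finset.sum_congr rfl fun I _ => by rw [← Finset.compl_eq_univ_sdiff]
  have hIntTerm : ∀ I : Finset (Fin k),
      Integrable (fun ω => (∏ i ∈ I, X t ω (r i) (c i)) * ∏ i ∈ Iᶜ, T ω (r i, c i)) μ := by
    intro I
    have hI := integrable_prodEntries hint t I r c
    set ψ : (({u : ℝ // 0 ≤ u ∧ u ≤ t} × Fin N × Fin N) → ℂ) → ℂ :=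
      fun w => ∏ i ∈ I, w (⟨t, ht, le_rfl⟩, (r i, c i)) with hψdef
    have hψ : Measurable ψ := Finset.measurable_prod _ fun i _ => measurable_pi_apply _
    have hφ : Measurable (fun v : (Fin N × Fin N) → ℂ => ∏ i ∈ Iᶜ, v (r i, c i)) :=
      Finset.measurable_prod _ fun i _ => measurable_pi_apply _
    have hIndep : IndepFun (fun ω => ∏ i ∈ I, X t ω (r i) (c i))
        (fun ω => ∏ i ∈ Iᶜ, T ω (r i, c i)) μ :=
      ((hL.2.2.2.1 t s ht hts).comp hφ hψ).symm
    exact hIndep.integrable_mul hI (hYint I)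
  calc tensMom μ (X s) r c
      = ∫ ω, ∑ I : Finset (Fin k),
          (∏ i ∈ I, X t ω (r i) (c i)) * ∏ i ∈ Iᶜ, T ω (r i, c i) ∂μ := by
        unfold tensMom; exact integral_congr_ae (Filter.Eventually.of_forall key)
    _ = ∑ I : Finset (Fin k), ∫ ω,
          (∏ i ∈ I, X t ω (r i) (c i)) * ∏ i ∈ Iᶜ, T ω (r i, c i) ∂μ :=
        integral_finset_sum _ fun I _ => hIntTerm I
    _ = _ := Finset.sum_congr rfl fun I _ => main I

lemma multiplicative_expand (hL : IsMultiplicativeLevy μ X)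
    (hmeas : ∀ t r s, Measurable fun ω => X t ω r s)
    (hint : ∀ (t : ℝ) (k : ℕ) (h : Fin k → Fin N × Fin N),
      Integrable (fun ω => ∏ s, X t ω (h s).1 (h s).2) μ)
    (r c : Fin k → Fin N) {t s : ℝ} (ht : 0 ≤ t) (hts : t ≤ s) :
    tensMom μ (X s) r c =
      ∑ b : Fin k → Fin N, tensMom μ (X (s - t)) r b * tensMom μ (X t) b c := by
  classical
  set T : Ω → (Fin N × Fin N) → ℂ :=
    fun ω rc => (X s ω * Ring.inverse (X t ω)) rc.1 rc.2 with hTdef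
  set T' : Ω → (Fin N × Fin N) → ℂ := fun ω rc => X (s - t) ω rc.1 rc.2 with hT'def
  have hT : Measurable T := by
    apply measurable_pi_lambda
    intro rc
    have heq : (fun ω => T ω rc) =
        fun ω => ∑ m : Fin N, X s ω rc.1 m * Ring.inverse (X t ω) m rc.2 := by
      funext ω; simp [hTdef, Matrix.mul_apply]
    rw [heq]
    exact Finset.measurable_sum _ fun m _ =>
      (hmeas s rc.1 m).mul (measurable_ringInverse_entry (fun i j => hmeas t i j) m rc.2)
  have hT' : Measurable T' :=
    measurable_pi_lambda _ fun rc => hmeas (s - t) rc.1 rc.2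
  have hstat := hL.2.2.2.2.2 t s ht hts
  have key : ∀ ω, (∏ i, X s ω (r i) (c i)) =
      ∑ b : Fin k → Fin N, (∏ i, T ω (r i, b i)) * ∏ i, X t ω (b i) (c i) := by
    intro ω
    have hXs : X s ω = (X s ω * Ring.inverse (X t ω)) * X t ω := by
      rw [mul_assoc, Ring.inverse_mul_cancel _ (hL.2.1 t ω ht), mul_one]
    have hentry : ∀ i : Fin k, X s ω (r i) (c i) =
        ∑ m : Fin N, T ω (r i, m) * X t ω m (c i) := by
      intro i
      conv_lhs => rw [hXs]
      rw [Matrix.mul_apply]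
    calc (∏ i, X s ω (r i) (c i))
        = ∏ i, ∑ m ∈ (Finset.univ : Finset (Fin N)), T ω (r i, m) * X t ω m (c i) :=
          Finset.prod_congr rfl fun i _ => hentry i
      _ = ∑ b ∈ Fintype.piFinset (fun _ : Fin k => (Finset.univ : Finset (Fin N))),
            ∏ i, T ω (r i, b i) * X t ω (b i) (c i) :=
          Finset.prod_univ_sum _ _
      _ = ∑ b : Fin k → Fin N, (∏ i, T ω (r i, b i)) * ∏ i, X t ω (b i) (c i) := by
          rw [Fintype.piFinset_univ]
          exact Finset.sum_congr rfl fun b _ => Finset.prod_mul_distrib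
  have hTbint : ∀ b : Fin k → Fin N, Integrable (fun ω => ∏ i, T ω (r i, b i)) μ := by
    intro b
    set φ : ((Fin N × Fin N) → ℂ) → ℂ := fun v => ∏ i, v (r i, b i) with hφdef
    have hφ : Measurable φ := Finset.measurable_prod _ fun i _ => measurable_pi_apply _
    have h1 : Integrable (φ ∘ T') μ := hint (s - t) k (fun i => (r i, b i))
    have h2 : Integrable φ (μ.map T') :=
      (integrable_map_measure hφ.aestronglyMeasurable hT'.aemeasurable).mpr h1
    have h3 : Integrable φ (μ.map T) := by rw [hstat]; exact h2
    exact (integrable_map_measure hφ.aestronglyMeasurable hT.aemeasurable).mp h3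
  have main : ∀ b : Fin k → Fin N,
      ∫ ω, (∏ i, T ω (r i, b i)) * ∏ i, X t ω (b i) (c i) ∂μ =
        tensMom μ (X (s - t)) r b * tensMom μ (X t) b c := by
    intro b
    set φ : ((Fin N × Fin N) → ℂ) → ℂ := fun v => ∏ i, v (r i, b i) with hφdef
    have hφ : Measurable φ := Finset.measurable_prod _ fun i _ => measurable_pi_apply _
    set ψ : (({u : ℝ // 0 ≤ u ∧ u ≤ t} × Fin N × Fin N) → ℂ) → ℂ :=
      fun w => ∏ i, w (⟨t, ht, le_rfl⟩, (b i, c i)) with hψdef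
    have hψ : Measurable ψ := Finset.measurable_prod _ fun i _ => measurable_pi_apply _
    have hIndep : IndepFun (fun ω => ∏ i, T ω (r i, b i))
        (fun ω => ∏ i, X t ω (b i) (c i)) μ := (hL.2.2.2.2.1 t s ht hts).comp hφ hψ
    have heq := indep_integral_mul (μ := μ) (A := fun ω => ∏ i, T ω (r i, b i))
      (B := fun ω => ∏ i, X t ω (b i) (c i)) (by exact hφ.comp hT)
      (Finset.measurable_prod _ fun i _ => hmeas t (b i) (c i)) hIndep
    have hst : ∫ ω, ∏ i, T ω (r i, b i) ∂μ = tensMom μ (X (s - t)) r b := by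
      have e1 : ∫ ω, ∏ i, T ω (r i, b i) ∂μ = ∫ v, φ v ∂(μ.map T) :=
        (integral_map hT.aemeasurable hφ.aestronglyMeasurable).symm
      have e2 : ∫ v, φ v ∂(μ.map T') = ∫ ω, ∏ i, X (s - t) ω (r i) (b i) ∂μ :=
        integral_map hT'.aemeasurable hφ.aestronglyMeasurable
      rw [e1, hstat, e2]; rfl
    rw [heq, hst]; rfl
  have hIntTerm : ∀ b : Fin k → Fin N,
      Integrable (fun ω => (∏ i, T ω (r i, b i)) * ∏ i, X t ω (b i) (c i)) μ := by
    intro b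
    set φ : ((Fin N × Fin N) → ℂ) → ℂ := fun v => ∏ i, v (r i, b i) with hφdef
    have hφ : Measurable φ := Finset.measurable_prod _ fun i _ => measurable_pi_apply _
    set ψ : (({u : ℝ // 0 ≤ u ∧ u ≤ t} × Fin N × Fin N) → ℂ) → ℂ :=
      fun w => ∏ i, w (⟨t, ht, le_rfl⟩, (b i, c i)) with hψdef
    have hψ : Measurable ψ := Finset.measurable_prod _ fun i _ => measurable_pi_apply _
    have hIndep : IndepFun (fun ω => ∏ i, T ω (r i, b i))
        (fun ω => ∏ i, X t ω (b i) (c i)) μ := (hL.2.2.2.2.1 t s ht hts).comp hφ hψ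
    exact hIndep.integrable_mul (hTbint b) (hint t k (fun i => (b i, c i)))
  calc tensMom μ (X s) r c
      = ∫ ω, ∑ b : Fin k → Fin N, (∏ i, T ω (r i, b i)) * ∏ i, X t ω (b i) (c i) ∂μ := by
        unfold tensMom; exact integral_congr_ae (Filter.Eventually.of_forall key)
    _ = ∑ b : Fin k → Fin N, ∫ ω, (∏ i, T ω (r i, b i)) * ∏ i, X t ω (b i) (c i) ∂μ :=
        integral_finset_sum _ fun b _ => hIntTerm b
    _ = _ := Finset.sum_congr rfl fun b _ => main b


/-! ### Additive case: analysis -/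

lemma reindexed_expand_add (hL : IsAdditiveLevy μ X)
    (hmeas : ∀ t r s, Measurable fun ω => X t ω r s)
    (hint : ∀ (t : ℝ) (k : ℕ) (h : Fin k → Fin N × Fin N),
      Integrable (fun ω => ∏ s, X t ω (h s).1 (h s).2) μ)
    (r c : Fin k → Fin N) {t s : ℝ} (ht : 0 ≤ t) (hts : t ≤ s) :
    tensMom μ (X s) r c =
      ∑ I : Finset (Fin k),
        tensMom μ (X t) (fun j => r (I.orderIsoOfFin rfl j))
            (fun j => c (I.orderIsoOfFin rfl j)) *
          tensMom μ (X (s - t)) (fun j => r (Iᶜ.orderIsoOfFin rfl j))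
            (fun j => c (Iᶜ.orderIsoOfFin rfl j)) := by
  rw [additive_expand hL hmeas hint r c ht hts]
  exact Finset.sum_congr rfl fun I _ => by rw [tensMom_reindex, tensMom_reindex]

lemma additive_right (hL : IsAdditiveLevy μ X)
    (hmeas : ∀ t r s, Measurable fun ω => X t ω r s)
    (hint : ∀ (t : ℝ) (k : ℕ) (h : Fin k → Fin N × Fin N),
      Integrable (fun ω => ∏ s, X t ω (h s).1 (h s).2) μ)
    (G : ∀ k : ℕ, (Fin k → Fin N) → (Fin k → Fin N) → ℂ)
    (hG : ∀ (k : ℕ) (r c : Fin k → Fin N),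
      HasDerivWithinAt (fun t => tensMom μ (X t) r c) (G k r c) (Set.Ici (0 : ℝ)) 0)
    (r c : Fin k → Fin N) {t₀ : ℝ} (ht₀ : 0 ≤ t₀) :
    HasDerivWithinAt (fun t => tensMom μ (X t) r c)
      (∑ I ∈ Finset.univ.filter fun I : Finset (Fin k) => I ≠ Finset.univ,
        insEntry I (fun a b => tensMom μ (X t₀) a b) (G Iᶜ.card) r c)
      (Set.Ici t₀) t₀ := by
  classical
  have hterm : ∀ I : Finset (Fin k),
      HasDerivWithinAt (fun t =>
        tensMom μ (X t₀) (fun j => r (I.orderIsoOfFin rfl j))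
            (fun j => c (I.orderIsoOfFin rfl j)) *
          tensMom μ (X (t - t₀)) (fun j => r (Iᶜ.orderIsoOfFin rfl j))
            (fun j => c (Iᶜ.orderIsoOfFin rfl j)))
        (if I = Finset.univ then 0
          else insEntry I (fun a b => tensMom μ (X t₀) a b) (G Iᶜ.card) r c)
        (Set.Ici t₀) t₀ := by
    intro I
    by_cases hI : I = Finset.univ
    · rw [if_pos hI]
      have hconst : (fun t =>
          tensMom μ (X t₀) (fun j => r (I.orderIsoOfFin rfl j))
              (fun j => c (I.orderIsoOfFin rfl j)) *
            tensMom μ (X (t - t₀)) (fun j => r (Iᶜ.orderIsoOfFin rfl j))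
              (fun j => c (Iᶜ.orderIsoOfFin rfl j))) =
          fun _ : ℝ => tensMom μ (X t₀) (fun j => r (I.orderIsoOfFin rfl j))
              (fun j => c (I.orderIsoOfFin rfl j)) := by
        funext t
        rw [tensMom_zero_order (X (t - t₀)) (card_compl_eq_zero hI), mul_one]
      rw [hconst]
      exact hasDerivWithinAt_const t₀ _ _
    · rw [if_neg hI]
      have hg' : HasDerivWithinAt (fun u => tensMom μ (X u)
          (fun j => r (Iᶜ.orderIsoOfFin rfl j)) (fun j => c (Iᶜ.orderIsoOfFin rfl j)))
          (G Iᶜ.card (fun j => r (Iᶜ.orderIsoOfFin rfl j))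
            (fun j => c (Iᶜ.orderIsoOfFin rfl j)))
          (Set.Ici 0) 0 := hG Iᶜ.card _ _
      have hsub : HasDerivWithinAt (fun t : ℝ => t - t₀) 1 (Set.Ici t₀) t₀ := by
        simpa using (hasDerivWithinAt_id t₀ (Set.Ici t₀)).sub_const t₀
      have hmaps : Set.MapsTo (fun t : ℝ => t - t₀) (Set.Ici t₀) (Set.Ici 0) :=
        fun t ht => Set.mem_Ici.2 (sub_nonneg.2 ht)
      have hcomp0 : HasDerivWithinAt
          (fun t : ℝ => tensMom μ (X (t - t₀)) (fun j => r (Iᶜ.orderIsoOfFin rfl j))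
            (fun j => c (Iᶜ.orderIsoOfFin rfl j)))
          (G Iᶜ.card (fun j => r (Iᶜ.orderIsoOfFin rfl j))
            (fun j => c (Iᶜ.orderIsoOfFin rfl j))) (Set.Ici t₀) t₀ := by
        have h := HasDerivWithinAt.scomp_of_eq (x := t₀) hg' hsub hmaps
          (by rw [sub_self])
        rw [one_smul] at h
        exact h
      have hcomp := hcomp0.const_mul
        (tensMom μ (X t₀) (fun j => r (I.orderIsoOfFin rfl j))
          (fun j => c (I.orderIsoOfFin rfl j)))
      have hval : insEntry I (fun a b => tensMom μ (X t₀) a b) (G Iᶜ.card) r c =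
          tensMom μ (X t₀) (fun j => r (I.orderIsoOfFin rfl j))
              (fun j => c (I.orderIsoOfFin rfl j)) *
            G Iᶜ.card (fun j => r (Iᶜ.orderIsoOfFin rfl j))
              (fun j => c (Iᶜ.orderIsoOfFin rfl j)) := rfl
      rw [hval]
      exact hcomp
  have hsum := HasDerivWithinAt.fun_sum (fun I (_ : I ∈ (Finset.univ : Finset (Finset (Fin k)))) =>
    hterm I)
  have hval : (∑ I : Finset (Fin k), if I = Finset.univ then 0
      else insEntry I (fun a b => tensMom μ (X t₀) a b) (G Iᶜ.card) r c) =
      ∑ I ∈ Finset.univ.filter fun I : Finset (Fin k) => I ≠ Finset.univ,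
        insEntry I (fun a b => tensMom μ (X t₀) a b) (G Iᶜ.card) r c := by
    rw [← Finset.sum_filter_add_sum_filter_not Finset.univ
      (fun I : Finset (Fin k) => I ≠ Finset.univ)]
    have h2 : ∑ I ∈ Finset.univ.filter (fun I : Finset (Fin k) => ¬I ≠ Finset.univ),
        (if I = Finset.univ then 0
          else insEntry I (fun a b => tensMom μ (X t₀) a b) (G Iᶜ.card) r c) = 0 :=
      Finset.sum_eq_zero fun I hI =>
        if_pos (not_not.1 (Finset.mem_filter.1 hI).2)
    have h1 : ∑ I ∈ Finset.univ.filter (fun I : Finset (Fin k) => I ≠ Finset.univ),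
        (if I = Finset.univ then 0
          else insEntry I (fun a b => tensMom μ (X t₀) a b) (G Iᶜ.card) r c) =
        ∑ I ∈ Finset.univ.filter (fun I : Finset (Fin k) => I ≠ Finset.univ),
          insEntry I (fun a b => tensMom μ (X t₀) a b) (G Iᶜ.card) r c :=
      Finset.sum_congr rfl fun I hI => if_neg (Finset.mem_filter.1 hI).2
    rw [h1, h2, add_zero]
  rw [← hval]
  refine hsum.congr (fun t ht => ?_) ?_
  · exact reindexed_expand_add hL hmeas hint r c ht₀ ht
  · exact reindexed_expand_add hL hmeas hint r c ht₀ le_rfl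

lemma additive_cont (hL : IsAdditiveLevy μ X)
    (hmeas : ∀ t r s, Measurable fun ω => X t ω r s)
    (hint : ∀ (t : ℝ) (k : ℕ) (h : Fin k → Fin N × Fin N),
      Integrable (fun ω => ∏ s, X t ω (h s).1 (h s).2) μ)
    (G : ∀ k : ℕ, (Fin k → Fin N) → (Fin k → Fin N) → ℂ)
    (hG : ∀ (k : ℕ) (r c : Fin k → Fin N),
      HasDerivWithinAt (fun t => tensMom μ (X t) r c) (G k r c) (Set.Ici (0 : ℝ)) 0) :
    ∀ (k : ℕ) (r c : Fin k → Fin N) (t₀ : ℝ), 0 ≤ t₀ →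
      ContinuousWithinAt (fun t => tensMom μ (X t) r c) (Set.Ici 0) t₀ := by
  intro k
  induction k using Nat.strong_induction_on with
  | _ k IH =>
  intro r c t₀ ht₀
  have hright : Tendsto (fun t => tensMom μ (X t) r c) (nhdsWithin t₀ (Set.Ici t₀))
      (nhds (tensMom μ (X t₀) r c)) :=
    (additive_right hL hmeas hint G hG r c ht₀).continuousWithinAt
  have hleft : Tendsto (fun t => tensMom μ (X t) r c)
      (nhdsWithin t₀ (Set.Ici 0 ∩ Set.Iio t₀)) (nhds (tensMom μ (X t₀) r c)) := by
    have hterm : ∀ I : Finset (Fin k),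
        Tendsto (fun t =>
          tensMom μ (X t) (fun j => r (I.orderIsoOfFin rfl j))
              (fun j => c (I.orderIsoOfFin rfl j)) *
            (tensMom μ (X 0) (fun j => r (Iᶜ.orderIsoOfFin rfl j))
                (fun j => c (Iᶜ.orderIsoOfFin rfl j)) -
              tensMom μ (X (t₀ - t)) (fun j => r (Iᶜ.orderIsoOfFin rfl j))
                (fun j => c (Iᶜ.orderIsoOfFin rfl j))))
          (nhdsWithin t₀ (Set.Ici 0 ∩ Set.Iio t₀)) (nhds 0) := by
      intro I
      by_cases hI : I = Finset.univ
      · have hzero : (fun t =>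
            tensMom μ (X t) (fun j => r (I.orderIsoOfFin rfl j))
                (fun j => c (I.orderIsoOfFin rfl j)) *
              (tensMom μ (X 0) (fun j => r (Iᶜ.orderIsoOfFin rfl j))
                  (fun j => c (Iᶜ.orderIsoOfFin rfl j)) -
                tensMom μ (X (t₀ - t)) (fun j => r (Iᶜ.orderIsoOfFin rfl j))
                  (fun j => c (Iᶜ.orderIsoOfFin rfl j)))) = fun _ : ℝ => (0 : ℂ) := by
          funext t
          rw [tensMom_zero_order (X 0) (card_compl_eq_zero hI),
            tensMom_zero_order (X (t₀ - t)) (card_compl_eq_zero hI), sub_self, mul_zero]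
        rw [hzero]
        exact tendsto_const_nhds
      · have hlt : I.card < k := card_lt_of_ne_univ hI
        have hC : Tendsto (fun t => tensMom μ (X t) (fun j => r (I.orderIsoOfFin rfl j))
            (fun j => c (I.orderIsoOfFin rfl j)))
            (nhdsWithin t₀ (Set.Ici 0 ∩ Set.Iio t₀))
            (nhds (tensMom μ (X t₀) (fun j => r (I.orderIsoOfFin rfl j))
              (fun j => c (I.orderIsoOfFin rfl j)))) :=
          (IH I.card hlt _ _ t₀ ht₀).mono inter_subset_left
        have hGcont : Tendsto (fun u => tensMom μ (X u)
            (fun j => r (Iᶜ.orderIsoOfFin rfl j)) (fun j => c (Iᶜ.orderIsoOfFin rfl j)))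
            (nhdsWithin 0 (Set.Ici 0))
            (nhds (tensMom μ (X 0) (fun j => r (Iᶜ.orderIsoOfFin rfl j))
              (fun j => c (Iᶜ.orderIsoOfFin rfl j)))) :=
          (hG Iᶜ.card _ _).continuousWithinAt
        have hg : Tendsto (fun t => tensMom μ (X (t₀ - t))
            (fun j => r (Iᶜ.orderIsoOfFin rfl j)) (fun j => c (Iᶜ.orderIsoOfFin rfl j)))
            (nhdsWithin t₀ (Set.Ici 0 ∩ Set.Iio t₀))
            (nhds (tensMom μ (X 0) (fun j => r (Iᶜ.orderIsoOfFin rfl j))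
              (fun j => c (Iᶜ.orderIsoOfFin rfl j)))) :=
          hGcont.comp (tendsto_sub_left' t₀)
        have hconst : Tendsto (fun _ : ℝ => tensMom μ (X 0)
            (fun j => r (Iᶜ.orderIsoOfFin rfl j)) (fun j => c (Iᶜ.orderIsoOfFin rfl j)))
            (nhdsWithin t₀ (Set.Ici 0 ∩ Set.Iio t₀))
            (nhds (tensMom μ (X 0) (fun j => r (Iᶜ.orderIsoOfFin rfl j))
              (fun j => c (Iᶜ.orderIsoOfFin rfl j)))) := tendsto_const_nhds
        have := hC.mul (hconst.sub hg)
        simpa using this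
    have hsum : Tendsto (fun t => ∑ I : Finset (Fin k),
        tensMom μ (X t) (fun j => r (I.orderIsoOfFin rfl j))
            (fun j => c (I.orderIsoOfFin rfl j)) *
          (tensMom μ (X 0) (fun j => r (Iᶜ.orderIsoOfFin rfl j))
              (fun j => c (Iᶜ.orderIsoOfFin rfl j)) -
            tensMom μ (X (t₀ - t)) (fun j => r (Iᶜ.orderIsoOfFin rfl j))
              (fun j => c (Iᶜ.orderIsoOfFin rfl j))))
        (nhdsWithin t₀ (Set.Ici 0 ∩ Set.Iio t₀)) (nhds 0) := by
      have := tendsto_finset_sum (Finset.univ : Finset (Finset (Fin k)))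
        (fun I _ => hterm I)
      simpa using this
    have hid : ∀ t ∈ Set.Ici (0:ℝ) ∩ Set.Iio t₀,
        tensMom μ (X t) r c = tensMom μ (X t₀) r c +
          ∑ I : Finset (Fin k),
            tensMom μ (X t) (fun j => r (I.orderIsoOfFin rfl j))
                (fun j => c (I.orderIsoOfFin rfl j)) *
              (tensMom μ (X 0) (fun j => r (Iᶜ.orderIsoOfFin rfl j))
                  (fun j => c (Iᶜ.orderIsoOfFin rfl j)) -
                tensMom μ (X (t₀ - t)) (fun j => r (Iᶜ.orderIsoOfFin rfl j))
                  (fun j => c (Iᶜ.orderIsoOfFin rfl j))) := by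
      intro t ht
      have h1 := reindexed_expand_add hL hmeas hint r c ht.1 ht.2.le
      have h2 := reindexed_expand_add hL hmeas hint r c ht.1 (le_refl t)
      rw [sub_self] at h2
      rw [h1, h2]
      rw [← Finset.sum_add_distrib]
      refine Finset.sum_congr rfl fun I _ => ?_
      ring
    have hfinal : Tendsto (fun t => tensMom μ (X t₀) r c +
        ∑ I : Finset (Fin k),
          tensMom μ (X t) (fun j => r (I.orderIsoOfFin rfl j))
              (fun j => c (I.orderIsoOfFin rfl j)) *
            (tensMom μ (X 0) (fun j => r (Iᶜ.orderIsoOfFin rfl j))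
                (fun j => c (Iᶜ.orderIsoOfFin rfl j)) -
              tensMom μ (X (t₀ - t)) (fun j => r (Iᶜ.orderIsoOfFin rfl j))
                (fun j => c (Iᶜ.orderIsoOfFin rfl j))))
        (nhdsWithin t₀ (Set.Ici 0 ∩ Set.Iio t₀)) (nhds (tensMom μ (X t₀) r c)) := by
      have hconst : Tendsto (fun _ : ℝ => tensMom μ (X t₀) r c)
          (nhdsWithin t₀ (Set.Ici 0 ∩ Set.Iio t₀)) (nhds (tensMom μ (X t₀) r c)) :=
        tendsto_const_nhds
      have := hconst.add hsum
      simpa using this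
    refine Tendsto.congr' ?_ hfinal
    filter_upwards [self_mem_nhdsWithin] with t ht
    exact (hid t ht).symm
  exact combine_tendsto hright hleft

lemma additive_left (hL : IsAdditiveLevy μ X)
    (hmeas : ∀ t r s, Measurable fun ω => X t ω r s)
    (hint : ∀ (t : ℝ) (k : ℕ) (h : Fin k → Fin N × Fin N),
      Integrable (fun ω => ∏ s, X t ω (h s).1 (h s).2) μ)
    (G : ∀ k : ℕ, (Fin k → Fin N) → (Fin k → Fin N) → ℂ)
    (hG : ∀ (k : ℕ) (r c : Fin k → Fin N),
      HasDerivWithinAt (fun t => tensMom μ (X t) r c) (G k r c) (Set.Ici (0 : ℝ)) 0)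
    (r c : Fin k → Fin N) {t₀ : ℝ} (ht₀ : 0 ≤ t₀) :
    Tendsto (slope (fun t => tensMom μ (X t) r c) t₀)
      (nhdsWithin t₀ (Set.Ici 0 ∩ Set.Iio t₀))
      (nhds (∑ I ∈ Finset.univ.filter fun I : Finset (Fin k) => I ≠ Finset.univ,
        insEntry I (fun a b => tensMom μ (X t₀) a b) (G Iᶜ.card) r c)) := by
  classical
  -- the slope identity on the left set
  have hid : ∀ t ∈ Set.Ici (0:ℝ) ∩ Set.Iio t₀,
      slope (fun t => tensMom μ (X t) r c) t₀ t =
        ∑ I : Finset (Fin k),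
          tensMom μ (X t) (fun j => r (I.orderIsoOfFin rfl j))
              (fun j => c (I.orderIsoOfFin rfl j)) *
            slope (fun u => tensMom μ (X u) (fun j => r (Iᶜ.orderIsoOfFin rfl j))
              (fun j => c (Iᶜ.orderIsoOfFin rfl j))) 0 (t₀ - t) := by
    intro t ht
    have h1 := reindexed_expand_add hL hmeas hint r c ht.1 ht.2.le
    have h2 := reindexed_expand_add hL hmeas hint r c ht.1 (le_refl t)
    rw [sub_self] at h2
    rw [slope_def_module, h1, h2]
    have hneg : (t - t₀ : ℝ)⁻¹ = (-(t₀ - t) : ℝ)⁻¹ := by rw [neg_sub]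
    rw [hneg, smul_sub_sum]
    refine Finset.sum_congr rfl fun I _ => ?_
    rw [slope_def_module, sub_zero]
  have hterm : ∀ I : Finset (Fin k),
      Tendsto (fun t =>
        tensMom μ (X t) (fun j => r (I.orderIsoOfFin rfl j))
            (fun j => c (I.orderIsoOfFin rfl j)) *
          slope (fun u => tensMom μ (X u) (fun j => r (Iᶜ.orderIsoOfFin rfl j))
            (fun j => c (Iᶜ.orderIsoOfFin rfl j))) 0 (t₀ - t))
        (nhdsWithin t₀ (Set.Ici 0 ∩ Set.Iio t₀))
        (nhds (if I = Finset.univ then 0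
          else insEntry I (fun a b => tensMom μ (X t₀) a b) (G Iᶜ.card) r c)) := by
    intro I
    by_cases hI : I = Finset.univ
    · rw [if_pos hI]
      have hzero : (fun t =>
          tensMom μ (X t) (fun j => r (I.orderIsoOfFin rfl j))
              (fun j => c (I.orderIsoOfFin rfl j)) *
            slope (fun u => tensMom μ (X u) (fun j => r (Iᶜ.orderIsoOfFin rfl j))
              (fun j => c (Iᶜ.orderIsoOfFin rfl j))) 0 (t₀ - t)) = fun _ : ℝ => (0 : ℂ) := by
        funext t
        rw [slope_def_module, tensMom_zero_order (X (t₀ - t)) (card_compl_eq_zero hI),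
          tensMom_zero_order (X 0) (card_compl_eq_zero hI), sub_self, smul_zero, mul_zero]
      rw [hzero]
      exact tendsto_const_nhds
    · rw [if_neg hI]
      have hC : Tendsto (fun t => tensMom μ (X t) (fun j => r (I.orderIsoOfFin rfl j))
          (fun j => c (I.orderIsoOfFin rfl j)))
          (nhdsWithin t₀ (Set.Ici 0 ∩ Set.Iio t₀))
          (nhds (tensMom μ (X t₀) (fun j => r (I.orderIsoOfFin rfl j))
            (fun j => c (I.orderIsoOfFin rfl j)))) :=
        (additive_cont hL hmeas hint G hG I.card _ _ t₀ ht₀).mono inter_subset_left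
      have hslope : Tendsto (slope (fun u => tensMom μ (X u)
          (fun j => r (Iᶜ.orderIsoOfFin rfl j)) (fun j => c (Iᶜ.orderIsoOfFin rfl j))) 0)
          (nhdsWithin 0 (Set.Ici 0 \ {0}))
          (nhds (G Iᶜ.card (fun j => r (Iᶜ.orderIsoOfFin rfl j))
            (fun j => c (Iᶜ.orderIsoOfFin rfl j)))) :=
        hasDerivWithinAt_iff_tendsto_slope.1 (hG Iᶜ.card _ _)
      have hg := hslope.comp (tendsto_sub_left t₀)
      have hval : insEntry I (fun a b => tensMom μ (X t₀) a b) (G Iᶜ.card) r c =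
          tensMom μ (X t₀) (fun j => r (I.orderIsoOfFin rfl j))
              (fun j => c (I.orderIsoOfFin rfl j)) *
            G Iᶜ.card (fun j => r (Iᶜ.orderIsoOfFin rfl j))
              (fun j => c (Iᶜ.orderIsoOfFin rfl j)) := rfl
      rw [hval]
      exact hC.mul hg
  have hsum := tendsto_finset_sum (Finset.univ : Finset (Finset (Fin k)))
    (fun I (_ : I ∈ (Finset.univ : Finset (Finset (Fin k)))) => hterm I)
  have hval : (∑ I : Finset (Fin k), if I = Finset.univ then 0
      else insEntry I (fun a b => tensMom μ (X t₀) a b) (G Iᶜ.card) r c) =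
      ∑ I ∈ Finset.univ.filter fun I : Finset (Fin k) => I ≠ Finset.univ,
        insEntry I (fun a b => tensMom μ (X t₀) a b) (G Iᶜ.card) r c := by
    rw [← Finset.sum_filter_add_sum_filter_not Finset.univ
      (fun I : Finset (Fin k) => I ≠ Finset.univ)]
    have h2 : ∑ I ∈ Finset.univ.filter (fun I : Finset (Fin k) => ¬I ≠ Finset.univ),
        (if I = Finset.univ then 0
          else insEntry I (fun a b => tensMom μ (X t₀) a b) (G Iᶜ.card) r c) = 0 :=
      Finset.sum_eq_zero fun I hI => if_pos (not_not.1 (Finset.mem_filter.1 hI).2)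
    have h1 : ∑ I ∈ Finset.univ.filter (fun I : Finset (Fin k) => I ≠ Finset.univ),
        (if I = Finset.univ then 0
          else insEntry I (fun a b => tensMom μ (X t₀) a b) (G Iᶜ.card) r c) =
        ∑ I ∈ Finset.univ.filter (fun I : Finset (Fin k) => I ≠ Finset.univ),
          insEntry I (fun a b => tensMom μ (X t₀) a b) (G Iᶜ.card) r c :=
      Finset.sum_congr rfl fun I hI => if_neg (Finset.mem_filter.1 hI).2
    rw [h1, h2, add_zero]
  rw [← hval]
  refine Tendsto.congr' ?_ hsum
  filter_upwards [self_mem_nhdsWithin] with t ht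
  exact (hid t ht).symm


/-! ### Multiplicative case: analysis -/

lemma mult_right (hL : IsMultiplicativeLevy μ X)
    (hmeas : ∀ t r s, Measurable fun ω => X t ω r s)
    (hint : ∀ (t : ℝ) (k : ℕ) (h : Fin k → Fin N × Fin N),
      Integrable (fun ω => ∏ s, X t ω (h s).1 (h s).2) μ)
    (G : ∀ k : ℕ, (Fin k → Fin N) → (Fin k → Fin N) → ℂ)
    (hG : ∀ (k : ℕ) (r c : Fin k → Fin N),
      HasDerivWithinAt (fun t => tensMom μ (X t) r c) (G k r c) (Set.Ici (0 : ℝ)) 0)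
    (r c : Fin k → Fin N) {t₀ : ℝ} (ht₀ : 0 ≤ t₀) :
    HasDerivWithinAt (fun t => tensMom μ (X t) r c)
      (∑ b : Fin k → Fin N, G k r b * tensMom μ (X t₀) b c)
      (Set.Ici t₀) t₀ := by
  have hterm : ∀ b : Fin k → Fin N,
      HasDerivWithinAt (fun t => tensMom μ (X (t - t₀)) r b * tensMom μ (X t₀) b c)
        (G k r b * tensMom μ (X t₀) b c) (Set.Ici t₀) t₀ := by
    intro b
    have hg' : HasDerivWithinAt (fun u => tensMom μ (X u) r b) (G k r b)
        (Set.Ici 0) 0 := hG k r b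
    have hsub : HasDerivWithinAt (fun t : ℝ => t - t₀) 1 (Set.Ici t₀) t₀ := by
      simpa using (hasDerivWithinAt_id t₀ (Set.Ici t₀)).sub_const t₀
    have hmaps : Set.MapsTo (fun t : ℝ => t - t₀) (Set.Ici t₀) (Set.Ici 0) :=
      fun t ht => Set.mem_Ici.2 (sub_nonneg.2 ht)
    have hcomp0 : HasDerivWithinAt (fun t : ℝ => tensMom μ (X (t - t₀)) r b)
        (G k r b) (Set.Ici t₀) t₀ := by
      have h := HasDerivWithinAt.scomp_of_eq (x := t₀) hg' hsub hmaps (by rw [sub_self])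
      rw [one_smul] at h
      exact h
    exact hcomp0.mul_const _
  have hsum := HasDerivWithinAt.fun_sum
    (fun b (_ : b ∈ (Finset.univ : Finset (Fin k → Fin N))) => hterm b)
  refine hsum.congr (fun t ht => ?_) ?_
  · exact multiplicative_expand hL hmeas hint r c ht₀ ht
  · exact multiplicative_expand hL hmeas hint r c ht₀ le_rfl

lemma mult_cont (hL : IsMultiplicativeLevy μ X)
    (hmeas : ∀ t r s, Measurable fun ω => X t ω r s)
    (hint : ∀ (t : ℝ) (k : ℕ) (h : Fin k → Fin N × Fin N),
      Integrable (fun ω => ∏ s, X t ω (h s).1 (h s).2) μ)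
    (G : ∀ k : ℕ, (Fin k → Fin N) → (Fin k → Fin N) → ℂ)
    (hG : ∀ (k : ℕ) (r c : Fin k → Fin N),
      HasDerivWithinAt (fun t => tensMom μ (X t) r c) (G k r c) (Set.Ici (0 : ℝ)) 0)
    (r c : Fin k → Fin N) {t₀ : ℝ} (ht₀ : 0 ≤ t₀) :
    ContinuousWithinAt (fun t => tensMom μ (X t) r c) (Set.Ici 0) t₀ := by
  classical
  have hright : Tendsto (fun t => tensMom μ (X t) r c) (nhdsWithin t₀ (Set.Ici t₀))
      (nhds (tensMom μ (X t₀) r c)) :=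
    (mult_right hL hmeas hint G hG r c ht₀).continuousWithinAt
  -- notation
  set S := Set.Ici (0:ℝ) ∩ Set.Iio t₀ with hS
  set E : ℝ → ℝ := fun u => ∑ a : Fin k → Fin N, ∑ b : Fin k → Fin N,
     ‖tensMom μ (X u) a b - tensMom μ (X 0) a b‖ with hE
  have hEnn : ∀ u, 0 ≤ E u := fun u =>
    Finset.sum_nonneg fun a _ => Finset.sum_nonneg fun b _ => norm_nonneg _
  have hdiff : ∀ t ∈ S, ∀ a : Fin k → Fin N,
      tensMom μ (X t₀) a c - tensMom μ (X t) a c =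
        ∑ b : Fin k → Fin N,
          (tensMom μ (X (t₀ - t)) a b - tensMom μ (X 0) a b) * tensMom μ (X t) b c := by
    intro t ht a
    have h1 := multiplicative_expand hL hmeas hint a c ht.1 ht.2.le
    have h2 := multiplicative_expand hL hmeas hint a c ht.1 (le_refl t)
    rw [sub_self] at h2
    rw [h1, h2, ← Finset.sum_sub_distrib]
    exact Finset.sum_congr rfl fun b _ => (sub_mul _ _ _).symm
  have hsingle : ∀ (u : ℝ) (a b : Fin k → Fin N),
       ‖tensMom μ (X u) a b - tensMom μ (X 0) a b‖ ≤ E u := by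
    intro u a b
    have h1 :  ‖tensMom μ (X u) a b - tensMom μ (X 0) a b‖ ≤
        ∑ b' : Fin k → Fin N,  ‖tensMom μ (X u) a b' - tensMom μ (X 0) a b'‖ :=
      Finset.single_le_sum
        (f := fun b' =>  ‖tensMom μ (X u) a b' - tensMom μ (X 0) a b'‖)
        (fun b' _ => norm_nonneg _) (Finset.mem_univ b)
    refine h1.trans ?_
    exact Finset.single_le_sum
      (f := fun a' => ∑ b' : Fin k → Fin N,
         ‖tensMom μ (X u) a' b' - tensMom μ (X 0) a' b'‖)
      (fun a' _ => Finset.sum_nonneg fun b' _ => norm_nonneg _)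
      (Finset.mem_univ a)
  have habs : ∀ t ∈ S, ∀ a : Fin k → Fin N,
       ‖tensMom μ (X t₀) a c - tensMom μ (X t) a c‖ ≤
        E (t₀ - t) * ∑ b : Fin k → Fin N,  ‖tensMom μ (X t) b c‖ := by
    intro t ht a
    rw [hdiff t ht a]
    calc  ‖∑ b : Fin k → Fin N,
          (tensMom μ (X (t₀ - t)) a b - tensMom μ (X 0) a b) * tensMom μ (X t) b c‖
        ≤ ∑ b : Fin k → Fin N, 
            ‖(tensMom μ (X (t₀ - t)) a b - tensMom μ (X 0) a b) * tensMom μ (X t) b c‖ :=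
          norm_sum_le _ _
      _ ≤ ∑ b : Fin k → Fin N, E (t₀ - t) *  ‖tensMom μ (X t) b c‖ := by
          refine Finset.sum_le_sum fun b _ => ?_
          rw [norm_mul]
          exact mul_le_mul_of_nonneg_right (hsingle _ a b) (norm_nonneg _)
      _ = E (t₀ - t) * ∑ b : Fin k → Fin N,  ‖tensMom μ (X t) b c‖ :=
          (Finset.mul_sum _ _ _).symm
  -- E (t₀ - t) → 0
  have hEt : Tendsto (fun t => E (t₀ - t)) (nhdsWithin t₀ S) (nhds 0) := by
    have hE0 : ∀ a b : Fin k → Fin N,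
        Tendsto (fun u =>  ‖tensMom μ (X u) a b - tensMom μ (X 0) a b‖)
          (nhdsWithin 0 (Set.Ici 0)) (nhds 0) := by
      intro a b
      have h1 : Tendsto (fun u => tensMom μ (X u) a b) (nhdsWithin 0 (Set.Ici 0))
          (nhds (tensMom μ (X 0) a b)) := (hG k a b).continuousWithinAt
      have h2 : Tendsto (fun u => tensMom μ (X u) a b - tensMom μ (X 0) a b)
          (nhdsWithin 0 (Set.Ici 0)) (nhds 0) := by
        have := h1.sub (tendsto_const_nhds : Tendsto
          (fun _ : ℝ => tensMom μ (X 0) a b) (nhdsWithin 0 (Set.Ici 0))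
          (nhds (tensMom μ (X 0) a b)))
        simpa using this
      have h3 := (continuous_norm.tendsto 0).comp h2
      simpa [Function.comp_def] using h3
    have hEsum : Tendsto E (nhdsWithin 0 (Set.Ici 0)) (nhds 0) := by
      have := tendsto_finset_sum (Finset.univ : Finset (Fin k → Fin N))
        (fun a (_ : a ∈ Finset.univ) =>
          tendsto_finset_sum (Finset.univ : Finset (Fin k → Fin N))
            (fun b (_ : b ∈ Finset.univ) => hE0 a b))
      simpa [hE] using this
    exact hEsum.comp (tendsto_sub_left' t₀)
  -- boundedness of the sum of moduli
  set M : ℝ := ∑ b : Fin k → Fin N,  ‖tensMom μ (X t₀) b c‖ with hM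
  set κ : ℝ := (Fintype.card (Fin k → Fin N) : ℝ) with hκ
  have hSnorm : ∀ t ∈ S, κ * E (t₀ - t) ≤ 1/2 →
      (∑ b : Fin k → Fin N,  ‖tensMom μ (X t) b c‖) ≤ 2 * M := by
    intro t ht hsmall
    set St := ∑ b : Fin k → Fin N,  ‖tensMom μ (X t) b c‖ with hSt
    have hStnn : 0 ≤ St :=
      Finset.sum_nonneg fun b _ => norm_nonneg _
    have hptwise : ∀ a : Fin k → Fin N,  ‖tensMom μ (X t) a c‖ ≤
         ‖tensMom μ (X t₀) a c‖ + E (t₀ - t) * St := by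
      intro a
      have h1 := habs t ht a
      have h2 :  ‖tensMom μ (X t) a c‖ ≤
           ‖tensMom μ (X t₀) a c‖ +
             ‖tensMom μ (X t₀) a c - tensMom μ (X t) a c‖ := by
        have h3 : tensMom μ (X t) a c =
            tensMom μ (X t₀) a c - (tensMom μ (X t₀) a c - tensMom μ (X t) a c) := by ring
        calc  ‖tensMom μ (X t) a c‖
            =  ‖tensMom μ (X t₀) a c -
                (tensMom μ (X t₀) a c - tensMom μ (X t) a c)‖ := by rw [← h3]
          _ ≤ _ := norm_sub_le _ _
      exact h2.trans (by linarith)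
    have h1 : St ≤ M + κ * (E (t₀ - t) * St) := by
      calc St ≤ ∑ a : Fin k → Fin N,
            ( ‖tensMom μ (X t₀) a c‖ + E (t₀ - t) * St) :=
          Finset.sum_le_sum fun a _ => hptwise a
        _ = M + κ * (E (t₀ - t) * St) := by
            rw [Finset.sum_add_distrib, Finset.sum_const, nsmul_eq_mul, Finset.card_univ]
    have h2 : κ * (E (t₀ - t) * St) ≤ (1/2) * St := by
      rw [← mul_assoc]
      exact mul_le_mul_of_nonneg_right hsmall hStnn
    linarith
  have hev1 : ∀ᶠ t in nhdsWithin t₀ S, κ * E (t₀ - t) ≤ 1/2 := by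
    have h1 : Tendsto (fun t => κ * E (t₀ - t)) (nhdsWithin t₀ S) (nhds (κ * 0)) :=
      hEt.const_mul κ
    rw [mul_zero] at h1
    exact h1.eventually (eventually_le_nhds (by norm_num))
  have hbound : ∀ᶠ t in nhdsWithin t₀ S,
      ‖tensMom μ (X t) r c - tensMom μ (X t₀) r c‖ ≤ E (t₀ - t) * (2 * M) := by
    filter_upwards [hev1, self_mem_nhdsWithin] with t h1 h2
    have h3 := habs t h2 r
    have h4 := hSnorm t h2 h1
    have h5 : ‖tensMom μ (X t) r c - tensMom μ (X t₀) r c‖ =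
         ‖tensMom μ (X t₀) r c - tensMom μ (X t) r c‖ := by
      rw [norm_sub_rev]
    rw [h5]
    calc  ‖tensMom μ (X t₀) r c - tensMom μ (X t) r c‖
        ≤ E (t₀ - t) * ∑ b : Fin k → Fin N,  ‖tensMom μ (X t) b c‖ := h3
      _ ≤ E (t₀ - t) * (2 * M) := mul_le_mul_of_nonneg_left h4 (hEnn _)
  have hzero : Tendsto (fun t => tensMom μ (X t) r c - tensMom μ (X t₀) r c)
      (nhdsWithin t₀ S) (nhds 0) := by
    refine squeeze_zero_norm' hbound ?_
    have := hEt.mul_const (2 * M)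
    simpa using this
  have hleft : Tendsto (fun t => tensMom μ (X t) r c) (nhdsWithin t₀ S)
      (nhds (tensMom μ (X t₀) r c)) := by
    simpa using hzero.add (tendsto_const_nhds : Tendsto
      (fun _ : ℝ => tensMom μ (X t₀) r c) (nhdsWithin t₀ S) (nhds (tensMom μ (X t₀) r c)))
  exact combine_tendsto hright hleft

lemma mult_left (hL : IsMultiplicativeLevy μ X)
    (hmeas : ∀ t r s, Measurable fun ω => X t ω r s)
    (hint : ∀ (t : ℝ) (k : ℕ) (h : Fin k → Fin N × Fin N),
      Integrable (fun ω => ∏ s, X t ω (h s).1 (h s).2) μ)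
    (G : ∀ k : ℕ, (Fin k → Fin N) → (Fin k → Fin N) → ℂ)
    (hG : ∀ (k : ℕ) (r c : Fin k → Fin N),
      HasDerivWithinAt (fun t => tensMom μ (X t) r c) (G k r c) (Set.Ici (0 : ℝ)) 0)
    (r c : Fin k → Fin N) {t₀ : ℝ} (ht₀ : 0 ≤ t₀) :
    Tendsto (slope (fun t => tensMom μ (X t) r c) t₀)
      (nhdsWithin t₀ (Set.Ici 0 ∩ Set.Iio t₀))
      (nhds (∑ b : Fin k → Fin N, G k r b * tensMom μ (X t₀) b c)) := by
  classical
  have hid : ∀ t ∈ Set.Ici (0:ℝ) ∩ Set.Iio t₀,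
      slope (fun t => tensMom μ (X t) r c) t₀ t =
        ∑ b : Fin k → Fin N,
          slope (fun u => tensMom μ (X u) r b) 0 (t₀ - t) * tensMom μ (X t) b c := by
    intro t ht
    have h1 := multiplicative_expand hL hmeas hint r c ht.1 ht.2.le
    have h2 := multiplicative_expand hL hmeas hint r c ht.1 (le_refl t)
    rw [sub_self] at h2
    rw [slope_def_module, h1, h2]
    have hneg : (t - t₀ : ℝ)⁻¹ = (-(t₀ - t) : ℝ)⁻¹ := by rw [neg_sub]
    rw [hneg, smul_sub_sum']
    refine Finset.sum_congr rfl fun b _ => ?_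
    rw [slope_def_module, sub_zero]
  have hterm : ∀ b : Fin k → Fin N,
      Tendsto (fun t => slope (fun u => tensMom μ (X u) r b) 0 (t₀ - t) *
          tensMom μ (X t) b c)
        (nhdsWithin t₀ (Set.Ici 0 ∩ Set.Iio t₀))
        (nhds (G k r b * tensMom μ (X t₀) b c)) := by
    intro b
    have hslope : Tendsto (slope (fun u => tensMom μ (X u) r b) 0)
        (nhdsWithin 0 (Set.Ici 0 \ {0})) (nhds (G k r b)) :=
      hasDerivWithinAt_iff_tendsto_slope.1 (hG k r b)
    have hg := hslope.comp (tendsto_sub_left t₀)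
    have hC : Tendsto (fun t => tensMom μ (X t) b c)
        (nhdsWithin t₀ (Set.Ici 0 ∩ Set.Iio t₀)) (nhds (tensMom μ (X t₀) b c)) :=
      (mult_cont hL hmeas hint G hG b c ht₀).mono inter_subset_left
    exact hg.mul hC
  have hsum := tendsto_finset_sum (Finset.univ : Finset (Fin k → Fin N))
    (fun b (_ : b ∈ (Finset.univ : Finset (Fin k → Fin N))) => hterm b)
  refine Tendsto.congr' ?_ hsum
  filter_upwards [self_mem_nhdsWithin] with t ht
  exact (hid t ht).symm

end LevyAux

/-- Let `(X_t)_{t≥0}` be a matrix-valued Lévy process (additive or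
multiplicative) with all entry moments finite, and suppose `t ↦ E[X_t^{⊗k}]` is
differentiable at `t = 0` with derivative `G_k` for every `k`.  Then `t ↦ E[X_t^{⊗k}]` is
differentiable at every `t₀ ≥ 0`, with derivative
`∑_{l<k} ∑_{|I|=l} 𝓘_I(E[X_{t₀}^{⊗l}], G_{k−l})` in the additive case and
`G_k · E[X_{t₀}^{⊗k}]` in the multiplicative case. -/
theorem levy_tensor_moment_derivative {N : ℕ}
    {Ω : Type*} [MeasurableSpace Ω] (μ : Measure Ω) [IsProbabilityMeasure μ]
    (X : ℝ → Ω → Matrix (Fin N) (Fin N) ℂ)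
    (hmeas : ∀ t r s, Measurable fun ω => X t ω r s)
    (hint : ∀ (t : ℝ) (k : ℕ) (h : Fin k → Fin N × Fin N),
      Integrable (fun ω => ∏ s, X t ω (h s).1 (h s).2) μ)
    (G : ∀ k : ℕ, (Fin k → Fin N) → (Fin k → Fin N) → ℂ)
    (hG : ∀ (k : ℕ) (r c : Fin k → Fin N),
      HasDerivWithinAt (fun t => tensMom μ (X t) r c) (G k r c) (Set.Ici (0 : ℝ)) 0) :
    (IsAdditiveLevy μ X →
      ∀ (k : ℕ) (r c : Fin k → Fin N) (t₀ : ℝ), 0 ≤ t₀ →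
        HasDerivWithinAt (fun t => tensMom μ (X t) r c)
          (∑ I ∈ Finset.univ.filter fun I : Finset (Fin k) => I ≠ Finset.univ,
            insEntry I (fun a b => tensMom μ (X t₀) a b) (G Iᶜ.card) r c)
          (Set.Ici (0 : ℝ)) t₀) ∧
    (IsMultiplicativeLevy μ X →
      ∀ (k : ℕ) (r c : Fin k → Fin N) (t₀ : ℝ), 0 ≤ t₀ →
        HasDerivWithinAt (fun t => tensMom μ (X t) r c)
          (∑ mid : Fin k → Fin N, G k r mid * tensMom μ (X t₀) mid c)
          (Set.Ici (0 : ℝ)) t₀) := by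
  constructor
  · intro hL k r c t₀ ht₀
    exact combine_slope (additive_right hL hmeas hint G hG r c ht₀)
      (additive_left hL hmeas hint G hG r c ht₀)
  · intro hL k r c t₀ ht₀
    exact combine_slope (mult_right hL hmeas hint G hG r c ht₀)
      (mult_left hL hmeas hint G hG r c ht₀)
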